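/- For every i ≥ 1, the map sending φ ∈ Inc(i) to the word (|φ⁻¹(1)|, |φ⁻¹(2)|, …, |φ⁻¹(i)|) of fiber cardinalities takes values in K_i, and for every w ∈ K_i the number of φ ∈ Inc(i) with |φ⁻¹(j)| = w_j for all j ∈ {1,…,i} equals c_w. -/

import Mathlib

/-- `K_i`: words `w = w₁⋯w_i` of natural numbers (indexed here by `Fin i`, so `w j`
is the `(j+1)`-st letter) with `w₁+⋯+w_j ≤ j−1` for all `1 ≤ j < i` and
`w₁+⋯+w_i = i−1`. -/
def IsKWord (i : ℕ) (w : Fin i → ℕ) : Prop :=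
  (∀ j : Fin i, (j : ℕ) + 1 < i →
    (∑ t ∈ Finset.univ.filter (fun t : Fin i => t ≤ j), w t) ≤ (j : ℕ)) ∧
  (∑ t, w t) = i - 1

/-- The coefficient `c_w = ∏_j C(d_j + w_j, w_j)` where
`d_j = j − 1 − (w₁ + ⋯ + w_j)`. -/
def kCoeff (i : ℕ) (w : Fin i → ℕ) : ℕ :=
  ∏ j : Fin i,
    Nat.choose
      ((j : ℕ) - (∑ t ∈ Finset.univ.filter (fun t : Fin i => t ≤ j), w t) + w j)
      (w j)

namespace IncCount

/-- partial sum `w₀ + ⋯ + w_{j-1}` (strictly below `j`). -/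
def Spre (i : ℕ) (w : Fin i → ℕ) (j : ℕ) : ℕ :=
  ∑ t ∈ Finset.univ.filter (fun t : Fin i => (t : ℕ) < j), w t

lemma card_filter_lt (n j : ℕ) :
    (Finset.univ.filter (fun k : Fin n => (k : ℕ) < j)).card = min j n := by
  rw [show min j n = (Finset.range (min j n)).card by simp]
  apply Finset.card_nbij (fun k : Fin n => (k : ℕ)) (t := Finset.range (min j n))
  · intro a ha
    simp only [Finset.mem_coe, Finset.mem_filter] at ha
    simp [Nat.lt_min, ha.2, a.isLt]
  · intro a _ b _ h; exact Fin.ext h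
  · intro b hb
    simp only [Finset.coe_range, Set.mem_Iio, Nat.lt_min] at hb
    exact ⟨⟨b, hb.2⟩, by simp [hb.1], rfl⟩

lemma Spre_succ (i : ℕ) (w : Fin i → ℕ) (j : ℕ) (hj : j < i) :
    Spre i w (j + 1) = Spre i w j + w ⟨j, hj⟩ := by
  unfold Spre
  have : Finset.univ.filter (fun t : Fin i => (t : ℕ) < j + 1)
      = insert (⟨j, hj⟩ : Fin i) (Finset.univ.filter (fun t : Fin i => (t : ℕ) < j)) := by
    ext t
    simp only [Finset.mem_filter, Finset.mem_insert, Finset.mem_univ, true_and, Fin.ext_iff]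
    omega
  rw [this, Finset.sum_insert (by simp)]
  ring

end IncCount

namespace IncCount2
open IncCount

def Fam (i : ℕ) (w : Fin i → ℕ) (j : ℕ) (A : Finset (Fin (i-1))) :
    Finset (Fin i → Finset (Fin (i-1))) :=
  Finset.univ.filter (fun S =>
    (∀ t : Fin i, (t : ℕ) < j → S t = ∅) ∧
    (∀ t : Fin i, j ≤ (t : ℕ) → (S t).card = w t) ∧
    (∀ t : Fin i, ∀ k ∈ S t, (k : ℕ) < (t : ℕ) ∧ k ∉ A) ∧
    (∀ t u : Fin i, t ≠ u → Disjoint (S t) (S u)))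

lemma fam_card (i : ℕ) (w : Fin i → ℕ)
    (hw : ∀ j : ℕ, j < i → Spre i w (j + 1) ≤ j) :
    ∀ d j : ℕ, j + d = i → ∀ A : Finset (Fin (i-1)),
      A.card = Spre i w j → (∀ k ∈ A, (k : ℕ) < j) →
      (Fam i w j A).card
        = ∏ t ∈ Finset.univ.filter (fun t : Fin i => j ≤ (t : ℕ)),
            Nat.choose ((t : ℕ) - Spre i w ((t : ℕ) + 1) + w t) (w t) := by
  intro d
  induction d with
  | zero =>
    intro j hj A hA1 hA2
    subst_vars
    have hfilt : Finset.univ.filter (fun t : Fin (j+0) => j ≤ (t : ℕ)) = ∅ := by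
      ext t; simp only [Finset.mem_filter, Finset.mem_univ, true_and, Finset.notMem_empty,
        iff_false, not_le]; omega
    rw [hfilt, Finset.prod_empty, Finset.card_eq_one]
    refine ⟨fun _ => ∅, ?_⟩
    ext S
    simp only [Fam, Finset.mem_filter, Finset.mem_univ, true_and, Finset.mem_singleton]
    constructor
    · rintro ⟨h1, _, _, _⟩
      funext t
      exact h1 t (by omega)
    · rintro rfl
      refine ⟨fun _ _ => rfl, fun t ht => absurd t.isLt (by omega), by simp, by simp⟩
  | succ d IH =>
    intro j hj A hA1 hA2
    have hji : j < i := by omega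
    set jf : Fin i := ⟨j, hji⟩ with hjf
    set pool : Finset (Fin (i-1)) :=
      (Finset.univ.filter (fun k : Fin (i-1) => (k : ℕ) < j)) \ A with hpool
    have hAsub : A ⊆ Finset.univ.filter (fun k : Fin (i-1) => (k : ℕ) < j) := by
      intro k hk; simp [hA2 k hk]
    have hpoolcard : pool.card = j - Spre i w j := by
      rw [hpool, Finset.card_sdiff_of_subset hAsub, card_filter_lt, hA1]
      have : min j (i-1) = j := by omega
      rw [this]
    -- fiberwise decomposition over the value of `S jf`
    have hstep : (Fam i w j A).card
        = ∑ T ∈ pool.powersetCard (w jf), (Fam i w (j+1) (A ∪ T)).card := by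
      rw [Finset.card_eq_sum_card_fiberwise
        (f := fun S : Fin i → Finset (Fin (i-1)) => S jf)
        (t := pool.powersetCard (w jf)) ?_]
      · apply Finset.sum_congr rfl
        intro T hT
        rw [Finset.mem_powersetCard] at hT
        refine Finset.card_bij' (fun S _ => Function.update S jf ∅)
          (fun S _ => Function.update S jf T) ?hi ?hj ?left ?right
        case hi =>
          intro S hS
          simp only [Finset.mem_filter] at hS
          obtain ⟨hS, hTeq⟩ := hS
          simp only [Fam, Finset.mem_filter, Finset.mem_univ, true_and] at hS ⊢
          obtain ⟨h1, h2, h3, h4⟩ := hS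
          refine ⟨?_, ?_, ?_, ?_⟩
          · intro t ht
            rcases eq_or_ne t jf with rfl | hne
            · simp
            · rw [Function.update_of_ne hne]
              exact h1 t (by
                have : (t : ℕ) ≠ j := fun h => hne (Fin.ext h)
                omega)
          · intro t ht
            have hne : t ≠ jf := by
              intro h; subst h; simp [hjf] at ht
            rw [Function.update_of_ne hne]
            exact h2 t (by
              have : (t : ℕ) ≠ j := fun h => hne (Fin.ext h)
              omega)
          · intro t k hk
            have hne : t ≠ jf := by
              rintro rfl; simp at hk
            rw [Function.update_of_ne hne] at hk
            obtain ⟨hk1, hk2⟩ := h3 t k hk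
            refine ⟨hk1, ?_⟩
            simp only [Finset.mem_union, not_or]
            refine ⟨hk2, ?_⟩
            intro hkT
            have := h4 t jf hne
            rw [hTeq] at this
            exact (Finset.disjoint_left.mp this) hk hkT
          · intro t u htu
            rcases eq_or_ne t jf with rfl | hne
            · simp
            · rcases eq_or_ne u jf with rfl | hne'
              · simp
              · rw [Function.update_of_ne hne, Function.update_of_ne hne']
                exact h4 t u htu
        case hj =>
          intro S hS
          simp only [Fam, Finset.mem_filter, Finset.mem_univ, true_and] at hS ⊢
          obtain ⟨h1, h2, h3, h4⟩ := hS
          refine ⟨⟨?_, ?_, ?_, ?_⟩, by simp⟩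
          · intro t ht
            have hne : t ≠ jf := by
              intro h; subst h; simp [hjf] at ht
            rw [Function.update_of_ne hne]
            exact h1 t (by omega)
          · intro t ht
            rcases eq_or_ne t jf with rfl | hne
            · simp [hT.2]
            · rw [Function.update_of_ne hne]
              exact h2 t (by
                have : (t : ℕ) ≠ j := fun h => hne (Fin.ext h)
                omega)
          · intro t k hk
            rcases eq_or_ne t jf with rfl | hne
            · rw [Function.update_self] at hk
              have := hT.1 hk
              rw [hpool, Finset.mem_sdiff, Finset.mem_filter] at this
              exact ⟨this.1.2, this.2⟩
            · rw [Function.update_of_ne hne] at hk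
              obtain ⟨hk1, hk2⟩ := h3 t k hk
              simp only [Finset.mem_union, not_or] at hk2
              exact ⟨hk1, hk2.1⟩
          · intro t u htu
            rcases eq_or_ne t jf with rfl | hne
            · rw [Function.update_self, Function.update_of_ne (Ne.symm htu)]
              rw [Finset.disjoint_left]
              intro k hkT hkS
              exact (h3 u k hkS).2 (by simp [hkT])
            · rcases eq_or_ne u jf with rfl | hne'
              · rw [Function.update_self, Function.update_of_ne hne]
                rw [Finset.disjoint_right]
                intro k hkT hkS
                exact (h3 t k hkS).2 (by simp [hkT])
              · rw [Function.update_of_ne hne, Function.update_of_ne hne']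
                exact h4 t u htu
        case left =>
          intro S hS
          simp only [Finset.mem_filter] at hS
          funext t
          rcases eq_or_ne t jf with rfl | hne
          · simp [hS.2]
          · simp [Function.update_of_ne hne]
        case right =>
          intro S hS
          simp only [Fam, Finset.mem_filter, Finset.mem_univ, true_and] at hS
          funext t
          rcases eq_or_ne t jf with rfl | hne
          · simp [hS.1 jf (by simp [hjf])]
          · simp [Function.update_of_ne hne]
      · -- f maps into powersetCard
        intro S hS
        simp only [Finset.mem_coe, Fam, Finset.mem_filter, Finset.mem_univ, true_and] at hS
        obtain ⟨h1, h2, h3, h4⟩ := hS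
        simp only [Finset.mem_coe, Finset.mem_powersetCard]
        constructor
        · intro k hk
          obtain ⟨hk1, hk2⟩ := h3 jf k hk
          rw [hpool, Finset.mem_sdiff, Finset.mem_filter]
          exact ⟨⟨Finset.mem_univ _, hk1⟩, hk2⟩
        · exact h2 jf le_rfl
    -- use IH on each term
    have hIH : ∀ T ∈ pool.powersetCard (w jf), (Fam i w (j+1) (A ∪ T)).card
        = ∏ t ∈ Finset.univ.filter (fun t : Fin i => j + 1 ≤ (t : ℕ)),
            Nat.choose ((t : ℕ) - Spre i w ((t : ℕ) + 1) + w t) (w t) := by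
      intro T hT
      rw [Finset.mem_powersetCard] at hT
      have hdisj : Disjoint A T := by
        rw [Finset.disjoint_right]
        intro k hkT
        have := hT.1 hkT
        rw [hpool, Finset.mem_sdiff] at this
        exact this.2
      apply IH (j+1) (by omega)
      · rw [Finset.card_union_of_disjoint hdisj, hA1, hT.2,
          Spre_succ i w j hji]
      · intro k hk
        rcases Finset.mem_union.mp hk with hk | hk
        · have := hA2 k hk; omega
        · have := hT.1 hk
          rw [hpool, Finset.mem_sdiff, Finset.mem_filter] at this
          omega
    rw [hstep, Finset.sum_congr rfl hIH, Finset.sum_const,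
      Finset.card_powersetCard, smul_eq_mul]
    -- split the product
    have hfsplit : Finset.univ.filter (fun t : Fin i => j ≤ (t : ℕ))
        = insert jf (Finset.univ.filter (fun t : Fin i => j + 1 ≤ (t : ℕ))) := by
      ext t
      simp only [Finset.mem_filter, Finset.mem_univ, true_and, Finset.mem_insert, Fin.ext_iff,
        hjf]
      omega
    rw [hfsplit, Finset.prod_insert (by simp [hjf])]
    congr 1
    have h1 := Spre_succ i w j hji
    have h2 := hw j hji
    rw [hpoolcard]
    congr 1
    simp only [hjf]
    omega

lemma Spre_eq (i : ℕ) (w : Fin i → ℕ) (j : Fin i) :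
    Spre i w ((j : ℕ) + 1)
      = ∑ t ∈ Finset.univ.filter (fun t : Fin i => t ≤ j), w t := by
  unfold Spre
  congr 1
  ext t
  simp only [Finset.mem_filter, Finset.mem_univ, true_and, Fin.le_def]
  omega

lemma count_eq_fam (i : ℕ) (w : Fin i → ℕ) (hsum : ∑ t, w t = i - 1) :
    (Finset.univ.filter (fun φ : Fin (i - 1) → Fin i =>
        (∀ k : Fin (i - 1), (k : ℕ) < (φ k : ℕ)) ∧
        ∀ j : Fin i, (Finset.univ.filter (fun k => φ k = j)).card = w j)).card
      = (Fam i w 0 ∅).card := by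
  apply Finset.card_bij
    (fun φ _ => fun t : Fin i => Finset.univ.filter (fun k => φ k = t))
  · intro φ hφ
    simp only [Finset.mem_filter, Finset.mem_univ, true_and] at hφ
    obtain ⟨h1, h2⟩ := hφ
    simp only [Fam, Finset.mem_filter, Finset.mem_univ, true_and]
    refine ⟨fun t ht => absurd ht (by omega), fun t _ => h2 t, ?_, ?_⟩
    · intro t k hk
      have hk' : φ k = t := by simpa using hk
      exact ⟨hk' ▸ h1 k, Finset.notMem_empty k⟩
    · intro t u htu
      rw [Finset.disjoint_left]
      intro k hk1 hk2
      have hk1' : φ k = t := by simpa using hk1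
      have hk2' : φ k = u := by simpa using hk2
      exact htu (hk1' ▸ hk2' ▸ rfl)
  · intro φ1 h1 φ2 h2 heq
    funext k
    have hk1 : k ∈ Finset.univ.filter (fun k' => φ1 k' = φ1 k) := by simp
    rw [congrFun heq (φ1 k)] at hk1
    simp only [Finset.mem_filter, Finset.mem_univ, true_and] at hk1
    exact hk1.symm
  · intro S hS
    simp only [Fam, Finset.mem_filter, Finset.mem_univ, true_and] at hS
    obtain ⟨_, h2, h3, h4⟩ := hS
    have hcov : ∀ k : Fin (i - 1), ∃ t, k ∈ S t := by
      have hbi : (Finset.univ.biUnion S).card = i - 1 := by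
        rw [Finset.card_biUnion (fun t _ u _ htu => h4 t u htu)]
        calc ∑ t, (S t).card = ∑ t, w t := by
              exact Finset.sum_congr rfl (fun t _ => h2 t (Nat.zero_le _))
          _ = i - 1 := hsum
      have huniv : Finset.univ.biUnion S = Finset.univ :=
        Finset.eq_univ_of_card _ (by simp [hbi])
      intro k
      have : k ∈ Finset.univ.biUnion S := huniv ▸ Finset.mem_univ k
      simpa using this
    set φ : Fin (i - 1) → Fin i := fun k => Classical.choose (hcov k) with hφdef
    have hmem : ∀ k, k ∈ S (φ k) := fun k => Classical.choose_spec (hcov k)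
    have hfib : ∀ t, Finset.univ.filter (fun k => φ k = t) = S t := by
      intro t
      ext k
      simp only [Finset.mem_filter, Finset.mem_univ, true_and]
      constructor
      · rintro rfl; exact hmem k
      · intro hk
        by_contra hne
        exact (Finset.disjoint_left.mp (h4 (φ k) t hne)) (hmem k) hk
    refine ⟨φ, ?_, funext hfib⟩
    simp only [Finset.mem_filter, Finset.mem_univ, true_and]
    refine ⟨fun k => (h3 (φ k) k (hmem k)).1, fun t => by rw [hfib t]; exact h2 t (Nat.zero_le _)⟩

lemma fibers_isKWord (i : ℕ) (hi : 1 ≤ i) (φ : Fin (i - 1) → Fin i)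
    (hφ : ∀ k : Fin (i - 1), (k : ℕ) < (φ k : ℕ)) :
    IsKWord i (fun j => (Finset.univ.filter (fun k => φ k = j)).card) := by
  constructor
  · intro j hj
    have hcount : ∑ t ∈ Finset.univ.filter (fun t : Fin i => t ≤ j),
        (Finset.univ.filter (fun k => φ k = t)).card
        = (Finset.univ.filter (fun k : Fin (i - 1) => φ k ≤ j)).card := by
      rw [Finset.card_eq_sum_card_fiberwise
        (f := φ) (t := Finset.univ.filter (fun t : Fin i => t ≤ j))
        (fun k hk => by
          simp only [Finset.mem_coe, Finset.mem_filter] at hk ⊢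
          exact ⟨Finset.mem_univ _, hk.2⟩)]
      apply Finset.sum_congr rfl
      intro t ht
      simp only [Finset.mem_filter, Finset.mem_univ, true_and] at ht
      congr 1
      ext k
      simp only [Finset.mem_filter, Finset.mem_univ, true_and]
      exact ⟨fun h => ⟨by rw [h]; exact ht, h⟩, fun h => h.2⟩
    rw [hcount]
    calc (Finset.univ.filter (fun k : Fin (i - 1) => φ k ≤ j)).card
        ≤ (Finset.univ.filter (fun k : Fin (i - 1) => (k : ℕ) < (j : ℕ))).card := by
          apply Finset.card_le_card
          intro k hk
          simp only [Finset.mem_filter, Finset.mem_univ, true_and] at hk ⊢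
          have := hφ k
          have h2 : (φ k : ℕ) ≤ (j : ℕ) := hk
          omega
      _ = min (j : ℕ) (i - 1) := card_filter_lt _ _
      _ ≤ (j : ℕ) := Nat.min_le_left _ _
  · have h := Finset.card_eq_sum_card_fiberwise (f := φ)
      (s := (Finset.univ : Finset (Fin (i - 1)))) (t := Finset.univ)
      (fun k _ => Finset.mem_univ _)
    simp only [Finset.card_univ, Fintype.card_fin] at h
    simpa using h.symm

end IncCount2

/-- the word of fiber cardinalities of any `φ ∈ Inc(i)` lies in `K_i`,
and for every `w ∈ K_i` the number of `φ ∈ Inc(i)` with fiber cardinalities `w`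
equals `c_w`.  Here `Inc(i)` is the set of maps `φ : {1,…,i−1} → {1,…,i}` with
`φ(k) > k`, modelled on `Fin (i-1) → Fin i`. -/
theorem inc_fibers_kword_and_count (i : ℕ) (hi : 1 ≤ i) :
    (∀ φ : Fin (i - 1) → Fin i, (∀ k : Fin (i - 1), (k : ℕ) < (φ k : ℕ)) →
      IsKWord i (fun j => (Finset.univ.filter (fun k => φ k = j)).card)) ∧
    (∀ w : Fin i → ℕ, IsKWord i w →
      (Finset.univ.filter (fun φ : Fin (i - 1) → Fin i =>
        (∀ k : Fin (i - 1), (k : ℕ) < (φ k : ℕ)) ∧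
        ∀ j : Fin i, (Finset.univ.filter (fun k => φ k = j)).card = w j)).card
        = kCoeff i w) := by
  constructor
  · exact fun φ hφ => IncCount2.fibers_isKWord i hi φ hφ
  · intro w hw
    obtain ⟨hw1, hw2⟩ := hw
    have hw' : ∀ j : ℕ, j < i → IncCount.Spre i w (j + 1) ≤ j := by
      intro j hji
      rcases lt_or_eq_of_le (Nat.succ_le_of_lt hji) with h | h
      · rw [IncCount2.Spre_eq i w ⟨j, hji⟩]
        exact hw1 ⟨j, hji⟩ h
      · have heq : IncCount.Spre i w (j + 1) = ∑ t, w t := by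
          unfold IncCount.Spre
          rw [show Finset.univ.filter (fun t : Fin i => (t : ℕ) < j + 1)
            = Finset.univ by
              ext t
              simp only [Finset.mem_filter, Finset.mem_univ, true_and, iff_true]
              omega]
        rw [heq, hw2]
        omega
    rw [IncCount2.count_eq_fam i w hw2,
      IncCount2.fam_card i w hw' i 0 (by omega) ∅ (by simp [IncCount.Spre]) (by simp)]
    unfold kCoeff
    rw [show Finset.univ.filter (fun t : Fin i => 0 ≤ (t : ℕ)) = Finset.univ by simp]
    apply Finset.prod_congr rfl
    intro t _
    rw [IncCount2.Spre_eq i w t]
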